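/- Fix β₁, α₁, β₂, α₂ ∈ ℂ and set u = t⊗1 − 1⊗t ∈ A = ℂ[t,t⁻¹] ⊗_ℂ ℂ[t,t⁻¹]. Then: (i) for every a ∈ ℂ[t,t⁻¹] the operator σ_a maps the ideal u·A of A into itself; (ii) the kernel of the multiplication map μ : A → ℂ[t,t⁻¹] equals u·A; consequently μ induces a ℂ-linear isomorphism A/(u·A) → ℂ[t,t⁻¹] carrying the operator induced by σ_a on the quotient to ρ^{(β₁+β₂, α₁+α₂)}_a, for every a ∈ ℂ[t,t⁻¹]. (This is the paper's identification V(β₁,α₁) ⊗ V(β₂,α₂)/(t₁−t₂) ≅ V(β₁+β₂, α₁+α₂).) -/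

import Mathlib

open LaurentPolynomial TensorProduct

set_option synthInstance.maxHeartbeats 1000000
set_option maxHeartbeats 1000000
noncomputable section

/-- `R = ℂ[t,t⁻¹]`, the algebra of complex Laurent polynomials. -/
abbrev R := LaurentPolynomial ℂ

/-- Differentiation on Laurent polynomials, as a `ℂ`-linear endomorphism:
`Der (T n) = n • T (n-1)`, i.e. `Der f = f'`. -/
noncomputable def Der : Module.End ℂ R :=
  (Finsupp.lsum ℂ fun n : ℤ =>
    LinearMap.toSpanSingleton ℂ R ((n : ℂ) • LaurentPolynomial.T (n - 1)) :
      (ℤ →₀ ℂ) →ₗ[ℂ] R) ∘ₗ (AddMonoidAlgebra.coeffLinearEquiv ℂ).toLinearMap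

/-- Multiplication by `a ∈ R` as a `ℂ`-linear endomorphism `m_a`. -/
noncomputable def mulE (a : R) : Module.End ℂ R := LinearMap.mulLeft ℂ a

/-- The operator `ρ^{(β,α)}_a : f ↦ -a f' + β a' f + α a f` of the
intermediate-series Virasoro module `V(β,α)`. -/
noncomputable def rho (β α : ℂ) (a : R) : Module.End ℂ R :=
  β • mulE (Der a) + α • mulE a - mulE a * Der

/-- `σ_a = ρ^{(β₁,α₁)}_a ⊗ id + id ⊗ ρ^{(β₂,α₂)}_a` on `A = R ⊗_ℂ R`. -/
noncomputable def sigma' (β₁ α₁ β₂ α₂ : ℂ) (a : R) : Module.End ℂ (R ⊗[ℂ] R) :=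
  TensorProduct.map (rho β₁ α₁ a) LinearMap.id + TensorProduct.map LinearMap.id (rho β₂ α₂ a)

/-- `u = t ⊗ 1 - 1 ⊗ t ∈ R ⊗_ℂ R`. -/
noncomputable def uEl : R ⊗[ℂ] R := (T 1) ⊗ₜ[ℂ] (1 : R) - (1 : R) ⊗ₜ[ℂ] (T 1)


lemma Der_single (n : ℤ) (c : ℂ) :
    Der (AddMonoidAlgebra.single n c) = c • ((n : ℂ) • T (n - 1)) := by
  rw [Der, LinearMap.comp_apply]; change (Finsupp.lsum ℂ _) (Finsupp.single n c) = _; erw [Finsupp.lsum_single]; simp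

lemma Der_T (n : ℤ) : Der (T n) = (n : ℂ) • T (n - 1) := by
  simpa using Der_single n 1

lemma CmT (c : ℂ) (n : ℤ) : (C c * T n : R) = c • T n := by
  rw [← single_eq_C_mul_T, show (T n : R) = AddMonoidAlgebra.single n 1 from rfl,
    AddMonoidAlgebra.smul_single, smul_eq_mul, mul_one]

lemma Der_mul (f g : R) : Der (f * g) = Der f * g + f * Der g := by
  induction f using LaurentPolynomial.induction_on' with
  | add p q hp hq =>
    simp only [add_mul, map_add, hp, hq]; ring
  | C_mul_T m a =>
    induction g using LaurentPolynomial.induction_on' with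
    | add p q hp hq =>
      simp only [mul_add, map_add, hp, hq]; ring
    | C_mul_T n b =>
      rw [CmT, CmT]
      simp only [smul_mul_smul_comm, ← T_add, map_smul, Der_T, smul_mul_assoc,
        mul_smul_comm, smul_smul]
      rw [show m - 1 + n = m + n - 1 from by ring, show m + (n - 1) = m + n - 1 from by ring,
        ← add_smul]
      congr 1
      push_cast
      ring

lemma mu_mul (x y : R ⊗[ℂ] R) :
    LinearMap.mul' ℂ R (x * y) = LinearMap.mul' ℂ R x * LinearMap.mul' ℂ R y := by
  rw [← Algebra.TensorProduct.lmul'_toLinearMap (R := ℂ) (S := R)]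
  exact map_mul (Algebra.TensorProduct.lmul' ℂ) x y

lemma mu_uEl : LinearMap.mul' ℂ R uEl = 0 := by
  simp [uEl]

-- w n := T n ⊗ 1 - 1 ⊗ T n ∈ span {uEl}
lemma wmem_nat (k : ℕ) :
    (T (k:ℤ)) ⊗ₜ[ℂ] (1 : R) - (1 : R) ⊗ₜ[ℂ] (T (k:ℤ)) ∈ Ideal.span {uEl} := by
  induction k with
  | zero => simp
  | succ n ih =>
    have key : (T ((n:ℤ)+1)) ⊗ₜ[ℂ] (1 : R) - (1 : R) ⊗ₜ[ℂ] (T ((n:ℤ)+1))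
        = (T (n:ℤ) ⊗ₜ[ℂ] (1:R)) * uEl
          + ((1:R) ⊗ₜ[ℂ] T 1) * ((T (n:ℤ)) ⊗ₜ[ℂ] (1 : R) - (1 : R) ⊗ₜ[ℂ] (T (n:ℤ))) := by
      simp only [uEl, mul_sub, Algebra.TensorProduct.tmul_mul_tmul, ← T_add, one_mul, mul_one]
      ring
    rw [show ((n:ℤ)+1 : ℤ) = ((n+1 : ℕ) : ℤ) from by push_cast; ring] at key
    rw [key]
    exact add_mem (Ideal.mul_mem_left _ _ (Ideal.subset_span rfl))
      (Ideal.mul_mem_left _ _ ih)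

lemma wmem (n : ℤ) :
    (T n) ⊗ₜ[ℂ] (1 : R) - (1 : R) ⊗ₜ[ℂ] (T n) ∈ Ideal.span {uEl} := by
  rcases le_or_gt 0 n with h | h
  · lift n to ℕ using h
    exact wmem_nat n
  · have hn : (0:ℤ) ≤ -n := by omega
    have hw := wmem_nat (-n).toNat
    rw [Int.toNat_of_nonneg hn] at hw
    have key : (T n) ⊗ₜ[ℂ] (1 : R) - (1 : R) ⊗ₜ[ℂ] (T n)
        = -((T n ⊗ₜ[ℂ] T n) * ((T (-n)) ⊗ₜ[ℂ] (1 : R) - (1 : R) ⊗ₜ[ℂ] (T (-n)))) := by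
      simp only [mul_sub, Algebra.TensorProduct.tmul_mul_tmul, ← T_add, mul_one,
        add_neg_cancel, T_zero]
      ring
    rw [key]
    exact neg_mem (Ideal.mul_mem_left _ _ hw)

lemma wmem' (f : R) :
    f ⊗ₜ[ℂ] (1 : R) - (1 : R) ⊗ₜ[ℂ] f ∈ Ideal.span {uEl} := by
  induction f using LaurentPolynomial.induction_on' with
  | add p q hp hq =>
    have : (p+q) ⊗ₜ[ℂ] (1:R) - (1:R) ⊗ₜ[ℂ] (p+q)
        = (p ⊗ₜ[ℂ] (1:R) - (1:R) ⊗ₜ[ℂ] p) + (q ⊗ₜ[ℂ] (1:R) - (1:R) ⊗ₜ[ℂ] q) := by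
      simp only [TensorProduct.add_tmul, TensorProduct.tmul_add]; ring
    rw [this]; exact add_mem hp hq
  | C_mul_T n a =>
    rw [CmT]
    have : (a • T n) ⊗ₜ[ℂ] (1:R) - (1:R) ⊗ₜ[ℂ] (a • T n)
        = a • ((T n) ⊗ₜ[ℂ] (1:R) - (1:R) ⊗ₜ[ℂ] (T n)) := by
      simp [TensorProduct.smul_tmul', TensorProduct.tmul_smul, smul_sub]
    rw [this]
    exact Submodule.smul_mem (Submodule.restrictScalars ℂ (Ideal.span {uEl})) a (wmem n)

lemma key_mem (x : R ⊗[ℂ] R) :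
    x - (LinearMap.mul' ℂ R x) ⊗ₜ[ℂ] (1 : R) ∈ Ideal.span {uEl} := by
  induction x using TensorProduct.induction_on with
  | zero => simp
  | tmul f g =>
    have : f ⊗ₜ[ℂ] g - (LinearMap.mul' ℂ R (f ⊗ₜ[ℂ] g)) ⊗ₜ[ℂ] (1:R)
        = -((f ⊗ₜ[ℂ] (1:R)) * (g ⊗ₜ[ℂ] (1:R) - (1:R) ⊗ₜ[ℂ] g)) := by
      simp only [LinearMap.mul'_apply, mul_sub, Algebra.TensorProduct.tmul_mul_tmul,
        mul_one, one_mul]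
      ring
    rw [this]
    exact neg_mem (Ideal.mul_mem_left _ _ (wmem' g))
  | add p q hp hq =>
    have : (p + q) - (LinearMap.mul' ℂ R (p+q)) ⊗ₜ[ℂ] (1:R)
        = (p - (LinearMap.mul' ℂ R p) ⊗ₜ[ℂ] (1:R)) + (q - (LinearMap.mul' ℂ R q) ⊗ₜ[ℂ] (1:R)) := by
      simp only [map_add, TensorProduct.add_tmul]; ring
    rw [this]; exact add_mem hp hq

lemma hker : LinearMap.ker (LinearMap.mul' ℂ R)
    = Submodule.restrictScalars ℂ (Ideal.span {uEl}) := by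
  ext x
  constructor
  · intro hx
    have hx' : LinearMap.mul' ℂ R x = 0 := hx
    have := key_mem x
    rw [hx'] at this
    simpa using this
  · intro hx
    have hx' : x ∈ Ideal.span {uEl} := hx
    rw [Ideal.mem_span_singleton] at hx'
    obtain ⟨c, rfl⟩ := hx'
    show LinearMap.mul' ℂ R (uEl * c) = 0
    rw [mu_mul, mu_uEl, zero_mul]

lemma mu_sigma (β₁ α₁ β₂ α₂ : ℂ) (a : R) (x : R ⊗[ℂ] R) :
    LinearMap.mul' ℂ R (sigma' β₁ α₁ β₂ α₂ a x)
      = rho (β₁ + β₂) (α₁ + α₂) a (LinearMap.mul' ℂ R x) := by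
  induction x using TensorProduct.induction_on with
  | zero => simp
  | add p q hp hq => simp only [map_add, hp, hq]
  | tmul f g =>
    simp only [sigma', LinearMap.add_apply, TensorProduct.map_tmul, LinearMap.id_coe, id_eq,
      map_add, LinearMap.mul'_apply, rho, mulE, LinearMap.sub_apply, LinearMap.smul_apply,
      Module.End.mul_apply, LinearMap.mulLeft_apply, Der_mul]
    simp only [Algebra.smul_def, map_add]
    ring


/-- (i) each `σ_a` maps the ideal `u·A` into itself;
(ii) `ker μ = u·A`; consequently `μ` induces a `ℂ`-linear isomorphism
`A/(u·A) ≃ R` carrying the operator induced by `σ_a` to `ρ^{(β₁+β₂, α₁+α₂)}_a`. -/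
theorem stmt11 (β₁ α₁ β₂ α₂ : ℂ) :
    (∀ (a : R), ∀ x ∈ Ideal.span {uEl}, sigma' β₁ α₁ β₂ α₂ a x ∈ Ideal.span {uEl}) ∧
    LinearMap.ker (LinearMap.mul' ℂ R)
      = Submodule.restrictScalars ℂ (Ideal.span {uEl}) ∧
    ∃ φ : ((R ⊗[ℂ] R) ⧸ Submodule.restrictScalars ℂ (Ideal.span {uEl})) ≃ₗ[ℂ] R,
      (∀ x : R ⊗[ℂ] R, φ (Submodule.Quotient.mk x) = LinearMap.mul' ℂ R x) ∧
      ∀ (a : R) (x : R ⊗[ℂ] R),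
        φ (Submodule.Quotient.mk (sigma' β₁ α₁ β₂ α₂ a x))
          = rho (β₁ + β₂) (α₁ + α₂) a (φ (Submodule.Quotient.mk x)) := by
  have hsp : ∀ y : R ⊗[ℂ] R, y ∈ Ideal.span {uEl} ↔ LinearMap.mul' ℂ R y = 0 := by
    intro y
    constructor
    · intro hy
      have : y ∈ LinearMap.ker (LinearMap.mul' ℂ R) := by rw [hker]; exact hy
      exact this
    · intro hy
      have : y ∈ LinearMap.ker (LinearMap.mul' ℂ R) := hy
      rw [hker] at this; exact this
  refine ⟨?_, hker, ?_⟩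
  · intro a x hx
    rw [hsp] at hx ⊢
    rw [mu_sigma, hx, map_zero]
  · set K := Submodule.restrictScalars ℂ (Ideal.span {uEl}) with hKdef
    have hKle : K ≤ LinearMap.ker (LinearMap.mul' ℂ R) := le_of_eq hker.symm
    refine ⟨LinearEquiv.ofLinear (Submodule.liftQ K (LinearMap.mul' ℂ R) hKle)
      ((Submodule.mkQ K) ∘ₗ ((TensorProduct.mk ℂ R R).flip (1:R))) ?_ ?_, ?_, ?_⟩
    · ext f
      simp [Submodule.liftQ_apply]
    · apply Submodule.linearMap_qext
      refine LinearMap.ext fun x => ?_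
      simp only [LinearMap.comp_apply, Submodule.mkQ_apply, Submodule.liftQ_apply,
        TensorProduct.mk_apply, LinearMap.flip_apply, LinearMap.id_apply]
      rw [Submodule.Quotient.eq]
      have := key_mem x
      have h2 : (LinearMap.mul' ℂ R x) ⊗ₜ[ℂ] (1:R) - x
          = -(x - (LinearMap.mul' ℂ R x) ⊗ₜ[ℂ] (1:R)) := by ring
      rw [h2]
      exact neg_mem (key_mem x)
    · intro x
      simp [Submodule.liftQ_apply]
    · intro a x
      rw [LinearEquiv.ofLinear_apply, LinearEquiv.ofLinear_apply,
        Submodule.liftQ_apply, Submodule.liftQ_apply, mu_sigma]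

end
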